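/- Let f : X → Y be an injective affine map between CAT(0) spaces whose rescaling function ρ is bounded between m > 0 and M < ∞. Then for every ε > 0 there is δ > 0 such that whenever x, y, z ∈ X are distinct points with Alexandrov angle ∠x(y,z) < δ, the rescaling constants satisfy |ρ([x,y]) − ρ([x,z])| < ε. -/

import Mathlib

open Real Filter

def IsUnitSpeedOn {X : Type*} [MetricSpace X] (γ : ℝ → X) (s : Set ℝ) : Prop :=
  ∀ a ∈ s, ∀ b ∈ s, dist (γ a) (γ b) = |a - b|

def GeodesicMetricSpace (X : Type*) [MetricSpace X] : Prop :=
  ∀ x y : X, ∃ γ : ℝ → X, γ 0 = x ∧ γ (dist x y) = y ∧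
    IsUnitSpeedOn γ (Set.Icc 0 (dist x y))

def CAT0Space (X : Type*) [MetricSpace X] : Prop :=
  GeodesicMetricSpace X ∧ ∀ x y m z : X,
    dist x m = dist x y / 2 → dist y m = dist x y / 2 →
    dist z m ^ 2 ≤ dist z x ^ 2 / 2 + dist z y ^ 2 / 2 - dist x y ^ 2 / 4

/-- The Euclidean comparison angle at `x` of the triple `(x, y, z)`. -/
noncomputable def compAngle {X : Type*} [MetricSpace X] (x y z : X) : ℝ :=
  Real.arccos ((dist x y ^ 2 + dist x z ^ 2 - dist y z ^ 2) / (2 * dist x y * dist x z))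

/-- **Small Angles Lemma.** Let `f : X → Y` be an injective affine map
between CAT(0) spaces whose rescaling constants lie in `[m, M]` with `m > 0`.  For every
`ε > 0` there is `δ > 0` such that whenever `x, y, z` are distinct points and the
Alexandrov angle `∠x(y,z)` (the limit as `t → 0⁺` of comparison angles along unit-speed
geodesics `α = [x,y]`, `β = [x,z]`) is `< δ`, the rescaling constants of `[x,y]` and
`[x,z]` satisfy `|ρ([x,y]) - ρ([x,z])| < ε`. -/
theorem small_angles_lemma {X Y : Type*} [MetricSpace X] [MetricSpace Y]
    (hX : CAT0Space X) (hY : CAT0Space Y) (f : X → Y) (hfinj : Function.Injective f)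
    (m M : ℝ) (hm : 0 < m) (hmM : m ≤ M)
    (haff : ∀ (γ : ℝ → X) (L : ℝ), 0 ≤ L → IsUnitSpeedOn γ (Set.Icc 0 L) →
      ∃ ρ : ℝ, m ≤ ρ ∧ ρ ≤ M ∧ ∀ a ∈ Set.Icc (0:ℝ) L, ∀ b ∈ Set.Icc (0:ℝ) L,
        dist (f (γ a)) (f (γ b)) = ρ * |a - b|) :
    ∀ ε : ℝ, 0 < ε → ∃ δ : ℝ, 0 < δ ∧
      ∀ (x y z : X) (α β : ℝ → X) (ρα ρβ θ : ℝ),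
        x ≠ y → x ≠ z → y ≠ z →
        α 0 = x → α (dist x y) = y → IsUnitSpeedOn α (Set.Icc 0 (dist x y)) →
        β 0 = x → β (dist x z) = z → IsUnitSpeedOn β (Set.Icc 0 (dist x z)) →
        Tendsto (fun t => compAngle x (α t) (β t)) (nhdsWithin 0 (Set.Ioi 0)) (nhds θ) →
        θ < δ →
        (∀ a ∈ Set.Icc 0 (dist x y), ∀ b ∈ Set.Icc 0 (dist x y),
          dist (f (α a)) (f (α b)) = ρα * |a - b|) →
        (∀ a ∈ Set.Icc 0 (dist x z), ∀ b ∈ Set.Icc 0 (dist x z),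
          dist (f (β a)) (f (β b)) = ρβ * |a - b|) →
        |ρα - ρβ| < ε := by
  intro ε hε
  have hM : 0 < M := lt_of_lt_of_le hm hmM
  refine ⟨ε / M, div_pos hε hM, ?_⟩
  intro x y z α β ρα ρβ θ hxy hxz hyz hα0 hαL hα hβ0 hβL hβ hθlim hθδ hfα hfβ
  have hdxy : 0 < dist x y := dist_pos.2 hxy
  have hdxz : 0 < dist x z := dist_pos.2 hxz
  -- eventually t is small and the comparison angle is < ε/M
  have h1 : ∀ᶠ t in nhdsWithin (0:ℝ) (Set.Ioi 0),
      compAngle x (α t) (β t) < ε / M := hθlim.eventually (gt_mem_nhds hθδ)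
  have h2 : Set.Ioo (0:ℝ) (min (dist x y) (dist x z)) ∈ nhdsWithin (0:ℝ) (Set.Ioi 0) :=
    Ioo_mem_nhdsGT_of_mem ⟨le_refl _, lt_min hdxy hdxz⟩
  obtain ⟨t, ht1, ht2⟩ := (h1.and (Filter.eventually_of_mem h2 (fun _ h => h))).exists
  obtain ⟨ht0, htm⟩ := ht2
  have htxy : t ∈ Set.Icc (0:ℝ) (dist x y) := ⟨ht0.le, (lt_min_iff.1 htm).1.le⟩
  have htxz : t ∈ Set.Icc (0:ℝ) (dist x z) := ⟨ht0.le, (lt_min_iff.1 htm).2.le⟩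
  have h0xy : (0:ℝ) ∈ Set.Icc (0:ℝ) (dist x y) := ⟨le_refl _, hdxy.le⟩
  have h0xz : (0:ℝ) ∈ Set.Icc (0:ℝ) (dist x z) := ⟨le_refl _, hdxz.le⟩
  -- distances from x
  have hdα : dist x (α t) = t := by
    have := hα 0 h0xy t htxy
    rw [hα0] at this
    rw [this]; rw [abs_of_nonpos (by linarith)]; ring
  have hdβ : dist x (β t) = t := by
    have := hβ 0 h0xz t htxz
    rw [hβ0] at this
    rw [this]; rw [abs_of_nonpos (by linarith)]; ring
  set d : ℝ := dist (α t) (β t) with hd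
  have hdnn : 0 ≤ d := dist_nonneg
  have hd2t : d ≤ 2 * t := by
    have := dist_triangle (α t) x (β t)
    rw [dist_comm (α t) x, hdα, hdβ] at this
    linarith
  -- compute the cosine of the comparison angle
  set θt : ℝ := compAngle x (α t) (β t) with hθt
  have hu : (dist x (α t) ^ 2 + dist x (β t) ^ 2 - dist (α t) (β t) ^ 2) /
      (2 * dist x (α t) * dist x (β t)) = (2 * t ^ 2 - d ^ 2) / (2 * t ^ 2) := by
    rw [hdα, hdβ, ← hd]; ring_nf
  have hul : -1 ≤ (2 * t ^ 2 - d ^ 2) / (2 * t ^ 2) := by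
    rw [le_div_iff₀ (by positivity : (0:ℝ) < 2 * t ^ 2)]
    nlinarith
  have huu : (2 * t ^ 2 - d ^ 2) / (2 * t ^ 2) ≤ 1 := by
    rw [div_le_one (by positivity)]
    nlinarith
  have hcos : Real.cos θt = (2 * t ^ 2 - d ^ 2) / (2 * t ^ 2) := by
    rw [hθt, compAngle, hu, Real.cos_arccos hul huu]
  have hθtnn : 0 ≤ θt := Real.arccos_nonneg _
  -- d ≤ t * θt
  have hcosb : 1 - θt ^ 2 / 2 ≤ Real.cos θt := Real.one_sub_sq_div_two_le_cos
  have hdsq : d ^ 2 ≤ (t * θt) ^ 2 := by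
    rw [hcos] at hcosb
    have h2t2 : (0:ℝ) < 2 * t ^ 2 := by positivity
    rw [le_div_iff₀ h2t2] at hcosb
    nlinarith
  have hdle : d ≤ t * θt := by
    nlinarith [mul_nonneg ht0.le hθtnn]
  -- |ρα - ρβ| * t ≤ dist (f (α t)) (f (β t))
  have hfαt : dist (f (α t)) (f x) = ρα * t := by
    have := hfα t htxy 0 h0xy
    rw [hα0] at this
    rw [this, abs_of_nonneg (by linarith)]; ring
  have hfβt : dist (f (β t)) (f x) = ρβ * t := by
    have := hfβ t htxz 0 h0xz
    rw [hβ0] at this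
    rw [this, abs_of_nonneg (by linarith)]; ring
  have htri : |ρα * t - ρβ * t| ≤ dist (f (α t)) (f (β t)) := by
    rw [← hfαt, ← hfβt]
    exact abs_dist_sub_le _ _ _
  -- dist (f (α t)) (f (β t)) ≤ M * d via a geodesic from α t to β t
  obtain ⟨γ, hγ0, hγL, hγ⟩ := hX.1 (α t) (β t)
  obtain ⟨ρ, hρm, hρM, hρ⟩ := haff γ d hdnn hγ
  have hfd : dist (f (α t)) (f (β t)) ≤ M * d := by
    have := hρ 0 ⟨le_refl _, hdnn⟩ d ⟨hdnn, le_refl _⟩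
    rw [hγ0, hγL] at this
    rw [this, abs_of_nonpos (by linarith)]
    have : ρ * -(0 - d) ≤ M * d := by
      have : ρ * d ≤ M * d := mul_le_mul_of_nonneg_right hρM hdnn
      linarith
    linarith [this]
  -- combine
  have hkey : |ρα - ρβ| * t ≤ M * (t * θt) := by
    calc |ρα - ρβ| * t = |ρα * t - ρβ * t| := by
          rw [← sub_mul, abs_mul, abs_of_nonneg ht0.le]
        _ ≤ dist (f (α t)) (f (β t)) := htri
        _ ≤ M * d := hfd
        _ ≤ M * (t * θt) := mul_le_mul_of_nonneg_left hdle hM.le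
  have hfin : |ρα - ρβ| ≤ M * θt := by
    have := hkey
    rw [mul_comm t θt, ← mul_assoc] at this
    exact le_of_mul_le_mul_right this ht0
  calc |ρα - ρβ| ≤ M * θt := hfin
    _ < M * (ε / M) := by exact mul_lt_mul_of_pos_left ht1 hM
    _ = ε := by field_simp
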